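/- Let M ∈ F and let (P, Q) be a Mano decomposition of M with factor C. Then the matrices M(x₁), M(x₂), P(x₁), P(x₂) are all nonzero, and for any choice, for i = 1, 2, of a nonzero column (p_i, q_i) of P(x_i) and of a nonzero column (f_i, g_i) of M(x_i), one has: (p₁q₂, p₂q₁) ≠ (0, 0), and p₁q₂·f₂g₁ = f₁g₂·p₂q₁ (i.e. the projective ratios (p₁q₂ : p₂q₁) and (f₁g₂ : f₂g₁) coincide in P¹(ℂ)). -/

import Mathlib

open Matrix


open Matrix

/-- `a ≡ b (mod q^ℤ)`, i.e. `a/b ∈ q^ℤ`. -/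
def qCong (q a b : ℂ) : Prop := ∃ m : ℤ, a = q ^ m * b

/-- Entrywise holomorphy on `ℂ ∖ {0}` of a matrix-valued function. -/
def MatHolo (M : ℂ → Matrix (Fin 2) (Fin 2) ℂ) : Prop :=
  ∀ i j : Fin 2, ∀ x : ℂ, x ≠ 0 → DifferentiableAt ℂ (fun y => M y i j) x

/-- The Jimbo–Sakai monodromy space `F`: `2×2` matrices `M` holomorphic on `ℂ*` with
`x² M(qx) S = R M(x)`, `det M ≢ 0`, and `det M(x_i) = 0` for `i = 1, 2, 3, 4`. -/
def FJS (q : ℂ) (ρ σv : Fin 2 → ℂ) (xs : Fin 4 → ℂ) :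
    Set (ℂ → Matrix (Fin 2) (Fin 2) ℂ) :=
  {M | MatHolo M ∧
    (∀ x : ℂ, x ≠ 0 →
      (x ^ 2) • (M (q * x) * Matrix.diagonal σv) = Matrix.diagonal ρ * M x) ∧
    (∃ x : ℂ, x ≠ 0 ∧ (M x).det ≠ 0) ∧
    ∀ k : Fin 4, (M (xs k)).det = 0}

/-- `GL₂(O(ℂ*))`: matrices holomorphic on `ℂ*` and invertible at every `x ≠ 0`. -/
def GLO (Λ : ℂ → Matrix (Fin 2) (Fin 2) ℂ) : Prop :=
  MatHolo Λ ∧ ∀ x : ℂ, x ≠ 0 → IsUnit (Λ x).det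

/-- A Mano decomposition of `M` with factor `C ∈ GL₂(ℂ)`: `M = P Q`,
`x P(qx) C = R P(x)`, `det P ≢ 0` and `det P(x₁) = det P(x₂) = 0`. -/
def Mano (q : ℂ) (ρ : Fin 2 → ℂ) (x1 x2 : ℂ) (M : ℂ → Matrix (Fin 2) (Fin 2) ℂ)
    (C : Matrix (Fin 2) (Fin 2) ℂ) (P Q : ℂ → Matrix (Fin 2) (Fin 2) ℂ) : Prop :=
  IsUnit C.det ∧ MatHolo P ∧ MatHolo Q ∧
  (∀ x : ℂ, x ≠ 0 → M x = P x * Q x) ∧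
  (∀ x : ℂ, x ≠ 0 → x • (P (q * x) * C) = Matrix.diagonal ρ * P x) ∧
  (∃ x : ℂ, x ≠ 0 ∧ (P x).det ≠ 0) ∧
  (P x1).det = 0 ∧ (P x2).det = 0

/-- `(f, g)` is a nonzero column of the `2×2` matrix `A`. -/
def IsNzCol (A : Matrix (Fin 2) (Fin 2) ℂ) (f g : ℂ) : Prop :=
  ∃ j : Fin 2, f = A 0 j ∧ g = A 1 j ∧ ¬(f = 0 ∧ g = 0)


open Filter Topology Set

noncomputable def Complex.abs : AbsoluteValue ℂ ℝ where
  toFun := fun z => ‖z‖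
  map_mul' := norm_mul
  nonneg' := norm_nonneg
  eq_zero' := fun _ => norm_eq_zero
  add_le' := norm_add_le

theorem Complex.norm_eq_abs (z : ℂ) : ‖z‖ = Complex.abs z := rfl

theorem Complex.continuous_abs : Continuous Complex.abs := continuous_norm

namespace JS16

noncomputable def thF (q : ℂ) (k : ℕ) (y : ℂ) : ℂ := ∏ n ∈ Finset.range k, (1 - q ^ n * y)

noncomputable def thP (q y : ℂ) : ℂ := limUnder atTop fun k => thF q k y


lemma cabs_sub_le (a b : ℂ) : Complex.abs (a - b) ≤ Complex.abs a + Complex.abs b := by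
  simpa [Complex.norm_eq_abs] using norm_sub_le a b

lemma geom_sum_le' {r : ℝ} (h0 : 0 ≤ r) (h1 : r < 1) (k : ℕ) :
    ∑ n ∈ Finset.range k, r ^ n ≤ 1 / (1 - r) := by
  have hs := hasSum_geometric_of_lt_one h0 h1
  have := Summable.sum_le_tsum (Finset.range k) (fun i _ => pow_nonneg h0 i) hs.summable
  rw [hs.tsum_eq] at this
  simpa [one_div] using this

lemma thF_est {q : ℂ} (y : ℂ) (k : ℕ) :
    Complex.abs (thF q k y) ≤ Real.exp (∑ n ∈ Finset.range k, Complex.abs q ^ n * Complex.abs y) ∧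
    Complex.abs (thF q k y - 1) ≤
      Real.exp (∑ n ∈ Finset.range k, Complex.abs q ^ n * Complex.abs y) - 1 := by
  induction k with
  | zero => simp [thF]
  | succ k ih =>
    obtain ⟨ih1, ih2⟩ := ih
    set S := ∑ n ∈ Finset.range k, Complex.abs q ^ n * Complex.abs y with hS
    have htnn : 0 ≤ Complex.abs q ^ k * Complex.abs y := by positivity
    have hSnn : 0 ≤ S := Finset.sum_nonneg fun n _ => by positivity
    have hsum : ∑ n ∈ Finset.range (k+1), Complex.abs q ^ n * Complex.abs y
        = S + Complex.abs q ^ k * Complex.abs y := by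
      rw [Finset.sum_range_succ]
    have hprod : thF q (k+1) y = thF q k y * (1 - q ^ k * y) := Finset.prod_range_succ _ _
    have habs : Complex.abs (q ^ k * y) = Complex.abs q ^ k * Complex.abs y := by
      simp [_root_.map_mul, _root_.map_pow]
    have hexp : Real.exp S * (1 + Complex.abs q ^ k * Complex.abs y)
        ≤ Real.exp (S + Complex.abs q ^ k * Complex.abs y) := by
      rw [Real.exp_add]
      have := Real.add_one_le_exp (Complex.abs q ^ k * Complex.abs y)
      nlinarith [Real.exp_pos S]
    constructor
    · rw [hprod, hsum, _root_.map_mul]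
      have h1 : Complex.abs (1 - q ^ k * y) ≤ 1 + Complex.abs q ^ k * Complex.abs y := by
        calc Complex.abs (1 - q ^ k * y) ≤ Complex.abs 1 + Complex.abs (q ^ k * y) :=
              cabs_sub_le _ _
        _ = 1 + Complex.abs q ^ k * Complex.abs y := by rw [habs]; simp
      calc Complex.abs (thF q k y) * Complex.abs (1 - q ^ k * y)
          ≤ Real.exp S * (1 + Complex.abs q ^ k * Complex.abs y) := by
            apply mul_le_mul ih1 h1 (by positivity) (Real.exp_pos S).le
        _ ≤ _ := hexp
    · rw [hprod, hsum]
      have key : thF q k y * (1 - q ^ k * y) - 1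
          = (thF q k y - 1) - thF q k y * (q ^ k * y) := by ring
      rw [key]
      calc Complex.abs ((thF q k y - 1) - thF q k y * (q ^ k * y))
          ≤ Complex.abs (thF q k y - 1) + Complex.abs (thF q k y * (q ^ k * y)) :=
            cabs_sub_le _ _
        _ ≤ (Real.exp S - 1) + Real.exp S * (Complex.abs q ^ k * Complex.abs y) := by
            rw [_root_.map_mul, habs]
            exact add_le_add ih2 (mul_le_mul_of_nonneg_right ih1 htnn)
        _ ≤ Real.exp (S + Complex.abs q ^ k * Complex.abs y) - 1 := by nlinarith
lemma thF_abs_le {q : ℂ} (hq1 : Complex.abs q < 1) (y : ℂ) (k : ℕ) :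
    Complex.abs (thF q k y) ≤ Real.exp (Complex.abs y / (1 - Complex.abs q)) := by
  refine (thF_est y k).1.trans (Real.exp_le_exp.2 ?_)
  have h0 : (0:ℝ) ≤ Complex.abs q := Complex.abs.nonneg q
  have hgeom : ∑ n ∈ Finset.range k, Complex.abs q ^ n ≤ 1 / (1 - Complex.abs q) :=
    geom_sum_le' h0 hq1 k
  calc ∑ n ∈ Finset.range k, Complex.abs q ^ n * Complex.abs y
      = (∑ n ∈ Finset.range k, Complex.abs q ^ n) * Complex.abs y := by
        rw [Finset.sum_mul]
    _ ≤ (1 / (1 - Complex.abs q)) * Complex.abs y := by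
        apply mul_le_mul_of_nonneg_right hgeom (Complex.abs.nonneg y)
    _ = Complex.abs y / (1 - Complex.abs q) := by ring

lemma thP_tendsto {q : ℂ} (hq1 : Complex.abs q < 1) (y : ℂ) :
    Tendsto (fun k => thF q k y) atTop (𝓝 (thP q y)) := by
  have hc : CauchySeq (fun k => thF q k y) := by
    apply cauchySeq_of_le_geometric (Complex.abs q)
      (Real.exp (Complex.abs y / (1 - Complex.abs q)) * Complex.abs y) hq1
    intro n
    have hprod : thF q (n+1) y = thF q n y * (1 - q ^ n * y) := Finset.prod_range_succ _ _
    rw [dist_eq_norm, hprod]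
    have : thF q n y - thF q n y * (1 - q ^ n * y) = thF q n y * (q ^ n * y) := by ring
    rw [this]
    calc ‖thF q n y * (q ^ n * y)‖ = Complex.abs (thF q n y) * (Complex.abs q ^ n * Complex.abs y) := by
          simp [Complex.norm_eq_abs, _root_.map_mul, _root_.map_pow]
      _ ≤ Real.exp (Complex.abs y / (1 - Complex.abs q)) * (Complex.abs q ^ n * Complex.abs y) := by
          apply mul_le_mul_of_nonneg_right (thF_abs_le hq1 y n) (by positivity)
      _ = Real.exp (Complex.abs y / (1 - Complex.abs q)) * Complex.abs y * Complex.abs q ^ n := by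
          ring
  exact hc.tendsto_limUnder

lemma thP_dist {q : ℂ} (hq1 : Complex.abs q < 1) {R : ℝ} {y : ℂ} (hy : Complex.abs y ≤ R)
    (k : ℕ) : dist (thF q k y) (thP q y)
      ≤ (Real.exp (R / (1 - Complex.abs q)) * R) * Complex.abs q ^ k / (1 - Complex.abs q) := by
  have hR : 0 ≤ R := (Complex.abs.nonneg y).trans hy
  have h0 : (0:ℝ) ≤ Complex.abs q := Complex.abs.nonneg q
  have h1q : 0 < 1 - Complex.abs q := by linarith
  apply dist_le_of_le_geometric_of_tendsto (Complex.abs q)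
    (Real.exp (R / (1 - Complex.abs q)) * R) hq1 ?_ (thP_tendsto hq1 y)
  intro n
  have hprod : thF q (n+1) y = thF q n y * (1 - q ^ n * y) := Finset.prod_range_succ _ _
  rw [dist_eq_norm, hprod]
  have : thF q n y - thF q n y * (1 - q ^ n * y) = thF q n y * (q ^ n * y) := by ring
  rw [this]
  have hmono : Real.exp (Complex.abs y / (1 - Complex.abs q)) ≤ Real.exp (R / (1 - Complex.abs q)) := by
    apply Real.exp_le_exp.2
    gcongr
  calc ‖thF q n y * (q ^ n * y)‖
      = Complex.abs (thF q n y) * (Complex.abs q ^ n * Complex.abs y) := by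
        simp [Complex.norm_eq_abs, _root_.map_mul, _root_.map_pow]
    _ ≤ Real.exp (R / (1 - Complex.abs q)) * (Complex.abs q ^ n * R) := by
        apply mul_le_mul ((thF_abs_le hq1 y n).trans hmono)
        · exact mul_le_mul_of_nonneg_left hy (by positivity)
        · positivity
        · positivity
    _ = Real.exp (R / (1 - Complex.abs q)) * R * Complex.abs q ^ n := by ring

lemma thP_differentiable {q : ℂ} (hq1 : Complex.abs q < 1) : Differentiable ℂ (thP q) := by
  intro y₀
  have h0 : (0:ℝ) ≤ Complex.abs q := Complex.abs.nonneg q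
  have h1q : 0 < 1 - Complex.abs q := by linarith
  set R := Complex.abs y₀ + 1 with hR
  have hRpos : 0 < R := by positivity
  have hball : DifferentiableOn ℂ (thP q) (Metric.ball (0:ℂ) R) := by
    have hunif : TendstoUniformlyOn (fun k y => thF q k y) (thP q) atTop (Metric.ball (0:ℂ) R) := by
      rw [Metric.tendstoUniformlyOn_iff]
      intro ε hε
      have hlim : Tendsto (fun k : ℕ =>
          (Real.exp (R / (1 - Complex.abs q)) * R) * Complex.abs q ^ k / (1 - Complex.abs q))
          atTop (𝓝 0) := by
        have := tendsto_pow_atTop_nhds_zero_of_lt_one h0 hq1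
        have := this.const_mul (Real.exp (R / (1 - Complex.abs q)) * R)
        have := this.div_const (1 - Complex.abs q)
        simpa using this
      filter_upwards [hlim.eventually (gt_mem_nhds hε)] with k hk y hy
      rw [dist_comm]
      have hyR : Complex.abs y ≤ R := by
        have := mem_ball_zero_iff.1 hy
        rw [Complex.norm_eq_abs] at this
        exact this.le
      exact lt_of_le_of_lt (thP_dist hq1 (R := R) hyR k) hk
    apply hunif.tendstoLocallyUniformlyOn.differentiableOn ?_ Metric.isOpen_ball
    filter_upwards with k
    apply Differentiable.differentiableOn
    unfold thF
    apply Differentiable.fun_finsetProd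
    intro n _
    exact (differentiable_const 1).sub ((differentiable_const (q^n)).mul differentiable_id)
  exact (hball y₀ (by simpa [mem_ball_zero_iff, Complex.norm_eq_abs, hR] using lt_add_one _)).differentiableAt
    (Metric.isOpen_ball.mem_nhds (by simpa [mem_ball_zero_iff, Complex.norm_eq_abs, hR] using lt_add_one _))

lemma thP_funeq {q : ℂ} (hq1 : Complex.abs q < 1) (y : ℂ) :
    thP q y = (1 - y) * thP q (q * y) := by
  have hsucc : ∀ k, thF q (k+1) y = (1 - y) * thF q k (q * y) := by
    intro k
    rw [thF, Finset.prod_range_succ']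
    simp only [pow_zero, one_mul]
    rw [mul_comm]
    congr 1
    apply Finset.prod_congr rfl
    intro n _
    ring_nf
  have t1 : Tendsto (fun k => thF q (k+1) y) atTop (𝓝 (thP q y)) :=
    (thP_tendsto hq1 y).comp (tendsto_add_atTop_nat 1)
  have t2 : Tendsto (fun k => (1 - y) * thF q k (q * y)) atTop (𝓝 ((1 - y) * thP q (q * y))) :=
    (thP_tendsto hq1 (q * y)).const_mul _
  exact tendsto_nhds_unique (t1.congr (fun k => hsucc k)) t2

lemma thP_split {q : ℂ} (hq1 : Complex.abs q < 1) (k : ℕ) (y : ℂ) :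
    thP q y = thF q k y * thP q (q ^ k * y) := by
  induction k with
  | zero => simp [thF]
  | succ k ih =>
    rw [ih, thP_funeq hq1 (q ^ k * y)]
    have h1 : thF q (k+1) y = thF q k y * (1 - q ^ k * y) := Finset.prod_range_succ _ _
    have h2 : q * (q ^ k * y) = q ^ (k+1) * y := by ring
    rw [h1, h2]
    ring

lemma thP_ne_zero_small {q : ℂ} (hq1 : Complex.abs q < 1) {y : ℂ}
    (hy : Complex.abs y ≤ (1 - Complex.abs q) / 2) : thP q y ≠ 0 := by
  have h0 : (0:ℝ) ≤ Complex.abs q := Complex.abs.nonneg q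
  have h1q : 0 < 1 - Complex.abs q := by linarith
  have hbd : Complex.abs (thP q y - 1) ≤ Real.exp (Complex.abs y / (1 - Complex.abs q)) - 1 := by
    have htend : Tendsto (fun k => Complex.abs (thF q k y - 1)) atTop
        (𝓝 (Complex.abs (thP q y - 1))) := by
      exact (Complex.continuous_abs.tendsto _).comp ((thP_tendsto hq1 y).sub_const 1)
    apply le_of_tendsto htend
    filter_upwards with k
    refine (thF_est y k).2.trans ?_
    have : ∑ n ∈ Finset.range k, Complex.abs q ^ n * Complex.abs y
        ≤ Complex.abs y / (1 - Complex.abs q) := by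
      calc ∑ n ∈ Finset.range k, Complex.abs q ^ n * Complex.abs y
          = (∑ n ∈ Finset.range k, Complex.abs q ^ n) * Complex.abs y := by rw [Finset.sum_mul]
        _ ≤ (1 / (1 - Complex.abs q)) * Complex.abs y :=
            mul_le_mul_of_nonneg_right (geom_sum_le' h0 hq1 k) (Complex.abs.nonneg y)
        _ = Complex.abs y / (1 - Complex.abs q) := by ring
    linarith [Real.exp_le_exp.2 this]
  have hhalf : Complex.abs y / (1 - Complex.abs q) ≤ 1/2 := by
    rw [div_le_iff₀ h1q]
    linarith
  have hlt : Real.exp (Complex.abs y / (1 - Complex.abs q)) - 1 < 1 := by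
    have h2 : Real.exp (Complex.abs y / (1 - Complex.abs q)) ≤ Real.exp (1/2) :=
      Real.exp_le_exp.2 hhalf
    have hlog : (1:ℝ)/2 < Real.log 2 := by
      have := Real.log_two_gt_d9
      linarith
    have : Real.exp (1/2) < Real.exp (Real.log 2) := Real.exp_lt_exp.2 hlog
    rw [Real.exp_log (by norm_num : (0:ℝ) < 2)] at this
    linarith
  intro h
  rw [h] at hbd
  rw [zero_sub] at hbd
  rw [show Complex.abs (-1) = 1 by simp] at hbd
  linarith

lemma thP_eq_zero_iff {q : ℂ} (hq0 : q ≠ 0) (hq1 : Complex.abs q < 1) (y : ℂ) :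
    thP q y = 0 ↔ ∃ n : ℕ, q ^ n * y = 1 := by
  constructor
  · intro h
    by_contra hc
    push_neg at hc
    have h0 : (0:ℝ) ≤ Complex.abs q := Complex.abs.nonneg q
    have h1q : 0 < 1 - Complex.abs q := by linarith
    obtain ⟨k, hk⟩ : ∃ k : ℕ, Complex.abs (q ^ k * y) ≤ (1 - Complex.abs q) / 2 := by
      rcases eq_or_ne y 0 with rfl | hy
      · exact ⟨0, by simpa using by positivity⟩
      · have htend : Tendsto (fun k : ℕ => Complex.abs q ^ k * Complex.abs y) atTop (𝓝 0) := by
          simpa using (tendsto_pow_atTop_nhds_zero_of_lt_one h0 hq1).mul_const (Complex.abs y)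
        have := htend.eventually (ge_mem_nhds (by positivity : (0:ℝ) < (1 - Complex.abs q)/2))
        obtain ⟨k, hk⟩ := this.exists
        exact ⟨k, by rw [_root_.map_mul, _root_.map_pow]; exact hk⟩
    have hsplit := thP_split hq1 k y
    rw [h] at hsplit
    have h2 : thP q (q ^ k * y) ≠ 0 := thP_ne_zero_small hq1 hk
    have h3 : thF q k y ≠ 0 := by
      rw [thF, Finset.prod_ne_zero_iff]
      intro n _
      intro hzero
      exact hc n (by linear_combination -hzero)
    exact h2 (by
      rcases mul_eq_zero.1 hsplit.symm with h' | h'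
      · exact absurd h' h3
      · exact h')
  · rintro ⟨n, hn⟩
    rw [thP_split hq1 (n+1) y]
    have : thF q (n+1) y = 0 := by
      apply Finset.prod_eq_zero (Finset.self_mem_range_succ n)
      rw [hn]; ring
    rw [this, zero_mul]

noncomputable def theta (q a x : ℂ) : ℂ := thP q (x / a) * thP q (q * a / x)

lemma theta_diffAt {q : ℂ} (hq1 : Complex.abs q < 1) {a : ℂ} (ha : a ≠ 0) {x : ℂ} (hx : x ≠ 0) :
    DifferentiableAt ℂ (theta q a) x := by
  apply DifferentiableAt.mul
  · exact ((thP_differentiable hq1) (x/a)).comp (f := fun y => y / a) x (differentiableAt_id.div_const a)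
  · exact ((thP_differentiable hq1) (q*a/x)).comp (f := fun y => q * a / y) x
      ((differentiableAt_const (q*a)).div differentiableAt_id hx)

lemma theta_funeq {q : ℂ} (hq0 : q ≠ 0) (hq1 : Complex.abs q < 1) {a : ℂ} (ha : a ≠ 0)
    {x : ℂ} (hx : x ≠ 0) : x * theta q a (q * x) = -a * theta q a x := by
  unfold theta
  have e1 : q * a / (q * x) = a / x := by
    field_simp
  have e2 : thP q (x / a) = (1 - x / a) * thP q (q * x / a) := by
    rw [thP_funeq hq1 (x/a)]
    ring_nf
  have e3 : thP q (a / x) = (1 - a / x) * thP q (q * a / x) := by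
    rw [thP_funeq hq1 (a/x)]
    ring_nf
  rw [e1, e3]
  rw [e2]
  have e4 : q * x / a = q * (x / a) := by ring
  field_simp
  ring

lemma theta_zero_iff {q : ℂ} (hq0 : q ≠ 0) (hq1 : Complex.abs q < 1) {a : ℂ} (ha : a ≠ 0)
    {x : ℂ} (hx : x ≠ 0) : theta q a x = 0 ↔ ∃ m : ℤ, x = q ^ m * a := by
  unfold theta
  rw [mul_eq_zero, thP_eq_zero_iff hq0 hq1, thP_eq_zero_iff hq0 hq1]
  constructor
  · rintro (⟨n, hn⟩ | ⟨n, hn⟩)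
    · refine ⟨-(n:ℤ), ?_⟩
      have hqn : (q:ℂ) ^ n ≠ 0 := pow_ne_zero _ hq0
      rw [_root_.zpow_neg, zpow_natCast, inv_mul_eq_div, eq_div_iff hqn]
      field_simp at hn
      linear_combination hn
    · refine ⟨(n:ℤ) + 1, ?_⟩
      have hqn : (q:ℂ) ^ n ≠ 0 := pow_ne_zero _ hq0
      rw [zpow_add₀ hq0, zpow_natCast, zpow_one]
      field_simp at hn
      linear_combination -hn
  · rintro ⟨m, rfl⟩
    rcases le_or_gt m 0 with hm | hm
    · left
      refine ⟨(-m).toNat, ?_⟩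
      have hz : (q:ℂ) ^ ((-m).toNat) = q ^ (-m : ℤ) := by
        rw [← zpow_natCast, Int.toNat_of_nonneg (by omega)]
      rw [hz]
      have e : (q:ℂ) ^ m * a / a = q ^ m := by field_simp
      rw [e, ← zpow_add₀ hq0]
      simp
    · right
      refine ⟨(m - 1).toNat, ?_⟩
      have hz : (q:ℂ) ^ ((m - 1).toNat) = q ^ (m - 1 : ℤ) := by
        rw [← zpow_natCast, Int.toNat_of_nonneg (by omega)]
      rw [hz]
      have hqm : (q:ℂ) ^ m ≠ 0 := zpow_ne_zero _ hq0
      have e : q * a / (q ^ m * a) = q ^ (1 - m : ℤ) := by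
        rw [zpow_sub₀ hq0, zpow_one]
        field_simp
      rw [e, ← zpow_add₀ hq0]
      rw [show (m - 1) + (1 - m) = 0 by ring, zpow_zero]

lemma thP_q_ne_zero {q : ℂ} (hq0 : q ≠ 0) (hq1 : Complex.abs q < 1) : thP q q ≠ 0 := by
  intro h
  rw [thP_eq_zero_iff hq0 hq1] at h
  obtain ⟨n, hn⟩ := h
  have : Complex.abs (q ^ n * q) = 1 := by rw [hn]; simp
  rw [_root_.map_mul, _root_.map_pow] at this
  have h1 : Complex.abs q ^ n * Complex.abs q ≤ 1 * Complex.abs q := by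
    apply mul_le_mul_of_nonneg_right _ (Complex.abs.nonneg q)
    exact pow_le_one₀ (Complex.abs.nonneg q) hq1.le
  rw [one_mul] at h1
  rw [this] at h1
  exact absurd (h1.trans_lt hq1) (lt_irrefl 1)

lemma theta_deriv_base {q : ℂ} (hq0 : q ≠ 0) (hq1 : Complex.abs q < 1) {a : ℂ} (ha : a ≠ 0) :
    deriv (theta q a) a ≠ 0 := by
  have hfun : theta q a = fun x => (1 - x / a) * (thP q (q * x / a) * thP q (q * a / x)) := by
    funext x
    unfold theta
    rw [thP_funeq hq1 (x/a)]
    have : q * (x / a) = q * x / a := by ring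
    rw [this]
    ring
  rw [hfun]
  have hg : DifferentiableAt ℂ (fun x => thP q (q * x / a) * thP q (q * a / x)) a := by
    apply DifferentiableAt.mul
    · exact ((thP_differentiable hq1) _).comp a
        (((differentiableAt_id.const_mul q)).div_const a)
    · exact ((thP_differentiable hq1) _).comp a
        ((differentiableAt_const (q*a)).div differentiableAt_id ha)
  have h1 : HasDerivAt (fun x : ℂ => 1 - x / a) (-(1/a)) a := by
    simpa using ((hasDerivAt_id a).div_const a).const_sub 1
  have h2 : HasDerivAt (fun x => thP q (q * x / a) * thP q (q * a / x))
      (deriv (fun x => thP q (q * x / a) * thP q (q * a / x)) a) a := hg.hasDerivAt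
  have h3 := h1.fun_mul h2
  rw [h3.deriv]
  have haa : 1 - a / a = 0 := by rw [div_self ha, sub_self]
  rw [haa]
  have hval : q * a / a = q := by field_simp
  simp only [hval, zero_mul, add_zero]
  have := thP_q_ne_zero hq0 hq1
  intro hcontra
  rcases mul_eq_zero.1 hcontra with h | h
  · rw [neg_eq_zero, one_div] at h
    exact ha (by simpa using inv_eq_zero.1 h)
  · exact this (by rcases mul_eq_zero.1 h with h' | h' <;> [exact h'; exact h'])

lemma theta_deriv_step {q : ℂ} (hq0 : q ≠ 0) (hq1 : Complex.abs q < 1) {a : ℂ} (ha : a ≠ 0)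
    {z : ℂ} (hz : z ≠ 0) (hθz : theta q a z = 0) :
    q * z * deriv (theta q a) (q * z) = -a * deriv (theta q a) z := by
  have hev : (fun x => theta q a (q * x)) =ᶠ[𝓝 z] fun x => -a * theta q a x / x := by
    have hopen : {x : ℂ | x ≠ 0} ∈ 𝓝 z := isOpen_ne.mem_nhds hz
    filter_upwards [hopen] with x hx
    have := theta_funeq hq0 hq1 ha hx
    field_simp
    linear_combination this
  have hql : HasDerivAt (fun x => theta q a (q * x)) (deriv (theta q a) (q * z) * q) z := by
    have h1 : HasDerivAt (theta q a) (deriv (theta q a) (q * z)) (q * z) :=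
      (theta_diffAt hq1 ha (mul_ne_zero hq0 hz)).hasDerivAt
    have h2 : HasDerivAt (fun x : ℂ => q * x) q z := by
      simpa using (hasDerivAt_id z).const_mul q
    exact h1.comp z h2
  have hqr : HasDerivAt (fun x => -a * theta q a x / x)
      ((-a * deriv (theta q a) z * z - -a * theta q a z * 1) / z ^ 2) z := by
    have h1 : HasDerivAt (fun x => -a * theta q a x) (-a * deriv (theta q a) z) z :=
      ((theta_diffAt hq1 ha hz).hasDerivAt).const_mul (-a)
    exact h1.div (hasDerivAt_id z) hz
  have heq : deriv (fun x => theta q a (q * x)) z = deriv (fun x => -a * theta q a x / x) z :=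
    hev.deriv_eq
  rw [hql.deriv, hqr.deriv] at heq
  rw [hθz] at heq
  field_simp at heq
  apply mul_left_cancel₀ hz
  linear_combination heq

lemma theta_deriv_ne {q : ℂ} (hq0 : q ≠ 0) (hq1 : Complex.abs q < 1) {a : ℂ} (ha : a ≠ 0)
    {x : ℂ} (hx : x ≠ 0) (hθx : theta q a x = 0) : deriv (theta q a) x ≠ 0 := by
  rw [theta_zero_iff hq0 hq1 ha hx] at hθx
  obtain ⟨m, rfl⟩ := hθx
  clear hx
  induction m using Int.induction_on with
  | zero => simpa using theta_deriv_base hq0 hq1 ha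
  | succ m ih =>
    have hz : (q:ℂ) ^ (m:ℤ) * a ≠ 0 := mul_ne_zero (zpow_ne_zero _ hq0) ha
    have hθ : theta q a (q ^ (m:ℤ) * a) = 0 := by
      rw [theta_zero_iff hq0 hq1 ha hz]; exact ⟨m, rfl⟩
    have hstep := theta_deriv_step hq0 hq1 ha hz hθ
    have he : (q:ℂ) ^ ((m:ℤ)+1) * a = q * (q ^ (m:ℤ) * a) := by
      rw [zpow_add_one₀ hq0]; ring
    rw [he]
    intro hcontra
    rw [hcontra, mul_zero] at hstep
    have : deriv (theta q a) (q ^ (m:ℤ) * a) = 0 := by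
      exact (mul_eq_zero.1 hstep.symm).resolve_left (neg_ne_zero.2 ha)
    exact ih this
  | pred m ih =>
    have hz : (q:ℂ) ^ (-(m:ℤ)-1) * a ≠ 0 := mul_ne_zero (zpow_ne_zero _ hq0) ha
    have hθ : theta q a (q ^ (-(m:ℤ)-1) * a) = 0 := by
      rw [theta_zero_iff hq0 hq1 ha hz]; exact ⟨_, rfl⟩
    have hstep := theta_deriv_step hq0 hq1 ha hz hθ
    have he : q * (q ^ (-(m:ℤ)-1) * a) = q ^ (-(m:ℤ)) * a := by
      rw [← mul_assoc, mul_comm q (q ^ (-(m:ℤ)-1)), ← zpow_add_one₀ hq0]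
      norm_num
    intro hcontra
    rw [hcontra, mul_zero] at hstep
    rw [he] at hstep
    rcases mul_eq_zero.1 hstep with h | h
    · exact (mul_ne_zero (zpow_ne_zero _ hq0) ha) h
    · exact ih h

lemma lemZcore {q : ℂ} (hq0 : q ≠ 0) (hq1 : Complex.abs q < 1) {ν : ℂ} (hν : ν ≠ 0)
    (hν1 : Complex.abs ν ≤ 1) {u : ℂ → ℂ} (hu : ∀ x : ℂ, x ≠ 0 → DifferentiableAt ℂ u x)
    (hfe : ∀ x : ℂ, x ≠ 0 → u (q * x) = ν * u x) {z₀ : ℂ} (hz₀ : z₀ ≠ 0) (hu0 : u z₀ = 0) :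
    ∀ x : ℂ, x ≠ 0 → u x = 0 := by
  have habsq : 0 < Complex.abs q := by
    simpa [Complex.abs.pos_iff] using hq0
  -- zeros propagate forward
  have hprop : ∀ n : ℕ, u (q ^ n * z₀) = 0 := by
    intro n
    induction n with
    | zero => simpa using hu0
    | succ n ih =>
      have hne : q ^ n * z₀ ≠ 0 := mul_ne_zero (pow_ne_zero _ hq0) hz₀
      have := hfe _ hne
      rw [ih, mul_zero] at this
      calc u (q ^ (n+1) * z₀) = u (q * (q ^ n * z₀)) := by ring_nf
        _ = 0 := this
  -- boundedness near 0
  set K := Metric.closedBall (0:ℂ) 1 \ Metric.ball (0:ℂ) (Complex.abs q) with hK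
  have hKcompact : IsCompact K := (isCompact_closedBall _ _).diff Metric.isOpen_ball
  have hKne : ∀ z ∈ K, z ≠ 0 := by
    rintro z ⟨_, hz2⟩ rfl
    exact hz2 (by simpa [Metric.mem_ball] using habsq)
  have hKcont : ContinuousOn u K := fun z hz => ((hu z (hKne z hz)).continuousAt).continuousWithinAt
  obtain ⟨A, hA⟩ := hKcompact.exists_bound_of_continuousOn hKcont
  set A' := max A 0 with hA'
  have hbound : ∀ n : ℕ, ∀ y : ℂ, y ≠ 0 → Complex.abs y ≤ 1 →
      Complex.abs q ^ (n + 1) ≤ Complex.abs y → Complex.abs (u y) ≤ A' := by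
    intro n
    induction n with
    | zero =>
      intro y hy h1 h2
      have : y ∈ K := by
        constructor
        · simpa [Metric.mem_closedBall, Complex.dist_eq, Complex.norm_eq_abs] using h1
        · simp only [Metric.mem_ball, Complex.dist_eq, sub_zero, not_lt]
          rw [pow_one] at h2
          simpa [Complex.norm_eq_abs] using h2
      exact le_trans (by simpa [Complex.norm_eq_abs] using hA y this) (le_max_left _ _)
    | succ n ih =>
      intro y hy h1 h2
      rcases le_or_gt (Complex.abs q) (Complex.abs y) with hc | hc
      · have : y ∈ K := by
          constructor
          · simpa [Metric.mem_closedBall, Complex.dist_eq, Complex.norm_eq_abs] using h1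
          · simp only [Metric.mem_ball, Complex.dist_eq, sub_zero, not_lt]
            simpa [Complex.norm_eq_abs] using hc
        exact le_trans (by simpa [Complex.norm_eq_abs] using hA y this) (le_max_left _ _)
      · set w := y / q with hw
        have hwne : w ≠ 0 := div_ne_zero hy hq0
        have hwabs : Complex.abs w = Complex.abs y / Complex.abs q := by
          rw [hw, map_div₀]
        have hw1 : Complex.abs w ≤ 1 := by
          rw [hwabs, div_le_one habsq]
          exact hc.le
        have hw2 : Complex.abs q ^ (n + 1) ≤ Complex.abs w := by
          rw [hwabs, le_div_iff₀ habsq, ← pow_succ]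
          exact h2
        have hyw : y = q * w := by
          rw [hw]; field_simp
        have := hfe w hwne
        rw [← hyw] at this
        rw [this, _root_.map_mul]
        calc Complex.abs ν * Complex.abs (u w) ≤ 1 * A' := by
              apply mul_le_mul hν1 (ih w hwne hw1 hw2) (Complex.abs.nonneg _) zero_le_one
          _ = A' := one_mul _
  have hbound' : ∀ y : ℂ, y ≠ 0 → Complex.abs y ≤ 1 → Complex.abs (u y) ≤ A' := by
    intro y hy h1
    have hypos : 0 < Complex.abs y := by simpa [Complex.abs.pos_iff] using hy
    obtain ⟨n, hn⟩ := exists_pow_lt_of_lt_one hypos hq1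
    refine hbound n y hy h1 ?_
    calc Complex.abs q ^ (n + 1) ≤ Complex.abs q ^ n := by
          apply pow_le_pow_of_le_one (Complex.abs.nonneg q) hq1.le
          omega
      _ ≤ Complex.abs y := hn.le
  -- removable singularity at 0
  set s : Set ℂ := Metric.ball (0:ℂ) 1 with hs
  have hsnhds : s ∈ 𝓝 (0:ℂ) := Metric.ball_mem_nhds _ one_pos
  have hd : DifferentiableOn ℂ u (s \ {0}) := fun z hz =>
    (hu z hz.2).differentiableWithinAt
  have hb : BddAbove (norm ∘ u '' (s \ {0})) := by
    refine ⟨A', ?_⟩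
    rintro - ⟨z, ⟨hz1, hz2⟩, rfl⟩
    have hz2' : z ≠ 0 := hz2
    have : Complex.abs z ≤ 1 := by
      have := Metric.mem_ball.1 hz1
      rw [Complex.dist_eq, sub_zero] at this
      exact this.le
    simpa [Complex.norm_eq_abs] using hbound' z hz2' this
  set U := Function.update u 0 (limUnder (𝓝[≠] (0:ℂ)) u) with hU
  have hUdiff : DifferentiableOn ℂ U s :=
    Complex.differentiableOn_update_limUnder_of_bddAbove hsnhds hd hb
  have hUan : AnalyticOnNhd ℂ U s := hUdiff.analyticOnNhd Metric.isOpen_ball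
  -- frequent zeros near 0
  have htend : Tendsto (fun n : ℕ => q ^ n * z₀) atTop (𝓝[≠] (0:ℂ)) := by
    apply tendsto_nhdsWithin_of_tendsto_nhds_of_eventually_within
    · simpa using (tendsto_pow_atTop_nhds_zero_of_norm_lt_one
        (by simpa [Complex.norm_eq_abs] using hq1)).mul_const z₀
    · filter_upwards with n
      exact mul_ne_zero (pow_ne_zero _ hq0) hz₀
  have hfreq : ∃ᶠ z in 𝓝[≠] (0:ℂ), U z = 0 := by
    apply htend.frequently
    apply Filter.Frequently.of_forall
    intro n
    have hne : q ^ n * z₀ ≠ 0 := mul_ne_zero (pow_ne_zero _ hq0) hz₀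
    rw [hU, Function.update_of_ne hne]
    exact hprop n
  have hUzero : EqOn U 0 s :=
    hUan.eqOn_zero_of_preconnected_of_frequently_eq_zero
      (convex_ball (0:ℂ) 1).isPreconnected (Metric.mem_ball_self one_pos) hfreq
  -- extend to all of ℂ*
  have huan : AnalyticOnNhd ℂ u {(0:ℂ)}ᶜ := by
    apply DifferentiableOn.analyticOnNhd _ isOpen_compl_singleton
    intro z hz
    exact (hu z hz).differentiableWithinAt
  have hpre : IsPreconnected {(0:ℂ)}ᶜ := by
    have : 1 < Module.rank ℝ ℂ := by
      rw [Complex.rank_real_complex]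
      norm_num
    exact (isConnected_compl_singleton_of_one_lt_rank this 0).isPreconnected
  -- pick a point inside the punctured ball
  obtain ⟨N, hN⟩ : ∃ N : ℕ, Complex.abs (q ^ N * z₀) < 1 := by
    have htend0 : Tendsto (fun n : ℕ => Complex.abs q ^ n * Complex.abs z₀) atTop (𝓝 0) := by
      simpa using (tendsto_pow_atTop_nhds_zero_of_lt_one (Complex.abs.nonneg q) hq1).mul_const
        (Complex.abs z₀)
    obtain ⟨N, hN⟩ := (htend0.eventually (gt_mem_nhds one_pos)).exists
    exact ⟨N, by rw [_root_.map_mul, _root_.map_pow]; exact hN⟩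
  set w₀ := q ^ N * z₀ with hw₀
  have hw₀ne : w₀ ≠ 0 := mul_ne_zero (pow_ne_zero _ hq0) hz₀
  have hfreq2 : ∃ᶠ z in 𝓝[≠] w₀, u z = 0 := by
    have hmem : s \ {0} ∈ 𝓝 w₀ := by
      apply IsOpen.mem_nhds (Metric.isOpen_ball.sdiff isClosed_singleton)
      constructor
      · simpa [Metric.mem_ball, Complex.dist_eq, Complex.norm_eq_abs] using hN
      · exact hw₀ne
    have : ∀ᶠ z in 𝓝 w₀, u z = 0 := by
      filter_upwards [hmem] with z hz
      have := hUzero hz.1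
      rw [hU, Function.update_of_ne hz.2] at this
      exact this
    exact (this.filter_mono nhdsWithin_le_nhds).frequently
  have : EqOn u 0 {(0:ℂ)}ᶜ :=
    huan.eqOn_zero_of_preconnected_of_frequently_eq_zero hpre hw₀ne hfreq2
  intro x hx
  exact this hx

lemma lemZ {q : ℂ} (hq0 : q ≠ 0) (hq1 : Complex.abs q < 1) {ν : ℂ} (hν : ν ≠ 0)
    {u : ℂ → ℂ} (hu : ∀ x : ℂ, x ≠ 0 → DifferentiableAt ℂ u x)
    (hfe : ∀ x : ℂ, x ≠ 0 → u (q * x) = ν * u x) {z₀ : ℂ} (hz₀ : z₀ ≠ 0) (hu0 : u z₀ = 0) :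
    ∀ x : ℂ, x ≠ 0 → u x = 0 := by
  rcases le_or_gt (Complex.abs ν) 1 with hν1 | hν1
  · exact lemZcore hq0 hq1 hν hν1 hu hfe hz₀ hu0
  · set w : ℂ → ℂ := fun x => u x⁻¹ with hw
    have hwdiff : ∀ x : ℂ, x ≠ 0 → DifferentiableAt ℂ w x := by
      intro x hx
      exact (hu x⁻¹ (inv_ne_zero hx)).comp x (differentiableAt_inv hx)
    have hwfe : ∀ x : ℂ, x ≠ 0 → w (q * x) = ν⁻¹ * w x := by
      intro x hx
      have hqx : (q * x)⁻¹ ≠ 0 := inv_ne_zero (mul_ne_zero hq0 hx)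
      have := hfe (q * x)⁻¹ hqx
      have harg : q * (q * x)⁻¹ = x⁻¹ := by
        field_simp
      rw [harg] at this
      rw [hw]
      simp only
      rw [this]
      field_simp
    have hwν : ν⁻¹ ≠ 0 := inv_ne_zero hν
    have hwν1 : Complex.abs ν⁻¹ ≤ 1 := by
      rw [map_inv₀]
      exact inv_le_one_of_one_le₀ hν1.le
    have hwz : w z₀⁻¹ = 0 := by
      rw [hw]
      simp only [inv_inv]
      exact hu0
    have := lemZcore hq0 hq1 hwν hwν1 hwdiff hwfe (inv_ne_zero hz₀) hwz
    intro x hx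
    have := this x⁻¹ (inv_ne_zero hx)
    rw [hw] at this
    simpa using this

lemma spiral_zero {q : ℂ} (hq0 : q ≠ 0) {a : ℂ} (ha : a ≠ 0) {u : ℂ → ℂ} {lam : ℂ}
    (hlam : lam ≠ 0) {k : ℕ} (hfe : ∀ x : ℂ, x ≠ 0 → x ^ (k+1) * u (q * x) = lam * u x)
    (hu0 : u a = 0) : ∀ m : ℤ, u (q ^ m * a) = 0 := by
  intro m
  induction m using Int.induction_on with
  | zero => simpa using hu0
  | succ m ih =>
    have hz : (q:ℂ) ^ (m:ℤ) * a ≠ 0 := mul_ne_zero (zpow_ne_zero _ hq0) ha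
    have := hfe _ hz
    rw [ih, mul_zero] at this
    have harg : q * (q ^ (m:ℤ) * a) = q ^ ((m:ℤ)+1) * a := by
      rw [← mul_assoc, mul_comm q (q ^ (m:ℤ)), ← zpow_add_one₀ hq0]
    rw [harg] at this
    have := mul_eq_zero.1 this
    rcases this with h | h
    · exact absurd h (pow_ne_zero _ hz)
    · exact h
  | pred m ih =>
    have hz : (q:ℂ) ^ (-(m:ℤ)-1) * a ≠ 0 := mul_ne_zero (zpow_ne_zero _ hq0) ha
    have := hfe _ hz
    have harg : q * (q ^ (-(m:ℤ)-1) * a) = q ^ (-(m:ℤ)) * a := by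
      rw [← mul_assoc, mul_comm q (q ^ (-(m:ℤ)-1)), ← zpow_add_one₀ hq0]
      norm_num
    rw [harg, ih, mul_zero] at this
    exact (mul_eq_zero.1 this.symm).resolve_left hlam

lemma theta_analyticAt {q : ℂ} (hq1 : Complex.abs q < 1) {a : ℂ} (ha : a ≠ 0) {z : ℂ}
    (hz : z ≠ 0) : AnalyticAt ℂ (theta q a) z :=
  (DifferentiableOn.analyticOnNhd
    (fun w hw => (theta_diffAt hq1 ha hw).differentiableWithinAt) isOpen_compl_singleton) z hz

lemma theta_ne_eventually {q : ℂ} (hq0 : q ≠ 0) (hq1 : Complex.abs q < 1) {a : ℂ} (ha : a ≠ 0)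
    {z : ℂ} (hz : z ≠ 0) : ∀ᶠ y in 𝓝[≠] z, theta q a y ≠ 0 ∧ y ≠ 0 := by
  have hne : ∀ᶠ y in 𝓝[≠] z, y ≠ 0 :=
    ((isOpen_ne.eventually_mem (show z ∈ {w : ℂ | w ≠ 0} from hz)).filter_mono
      nhdsWithin_le_nhds)
  have hθ : ∀ᶠ y in 𝓝[≠] z, theta q a y ≠ 0 := by
    by_cases hθz : theta q a z = 0
    · rcases (theta_analyticAt hq1 ha hz).eventually_eq_zero_or_eventually_ne_zero with hev | hev
      · exfalso
        have : deriv (theta q a) z = 0 := by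
          have heq : theta q a =ᶠ[𝓝 z] (fun _ => (0:ℂ)) := hev
          rw [heq.deriv_eq]
          simp
        exact theta_deriv_ne hq0 hq1 ha hz hθz this
      · exact hev
    · exact (((theta_diffAt hq1 ha hz).continuousAt.eventually_ne hθz)).filter_mono
        nhdsWithin_le_nhds
  exact hθ.and hne

lemma lemD {q : ℂ} (hq0 : q ≠ 0) (hq1 : Complex.abs q < 1) {a : ℂ} (ha : a ≠ 0)
    {u : ℂ → ℂ} (hu : ∀ x : ℂ, x ≠ 0 → DifferentiableAt ℂ u x) {lam : ℂ} (hlam : lam ≠ 0)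
    {k : ℕ} (hfe : ∀ x : ℂ, x ≠ 0 → x ^ (k+1) * u (q * x) = lam * u x) (hu0 : u a = 0) :
    ∃ v : ℂ → ℂ, (∀ x : ℂ, x ≠ 0 → DifferentiableAt ℂ v x) ∧
      (∀ x : ℂ, x ≠ 0 → x ^ k * v (q * x) = (lam / (-a)) * v x) ∧
      (∀ x : ℂ, x ≠ 0 → u x = theta q a x * v x) ∧
      (deriv u a = 0 → v a = 0) := by
  classical
  set θ : ℂ → ℂ := theta q a with hθdef
  have hθa : θ a = 0 := by
    rw [hθdef, theta_zero_iff hq0 hq1 ha ha]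
    exact ⟨0, by simp⟩
  have hspiral : ∀ x : ℂ, x ≠ 0 → θ x = 0 → u x = 0 := by
    intro x hx hθx
    rw [hθdef, theta_zero_iff hq0 hq1 ha hx] at hθx
    obtain ⟨m, rfl⟩ := hθx
    exact spiral_zero hq0 ha hlam hfe hu0 m
  set v : ℂ → ℂ := fun y => if θ y = 0 then deriv u y / deriv θ y else u y / θ y with hvdef
  have huan : ∀ z : ℂ, z ≠ 0 → AnalyticAt ℂ u z := fun z hz =>
    (DifferentiableOn.analyticOnNhd (fun w hw => (hu w hw).differentiableWithinAt)
      isOpen_compl_singleton) z hz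
  -- differentiability of v
  have hvd : ∀ x : ℂ, x ≠ 0 → DifferentiableAt ℂ v x := by
    intro z hz
    by_cases hθz : θ z = 0
    · -- spiral point
      have huz : u z = 0 := hspiral z hz hθz
      have hdza : AnalyticAt ℂ (dslope u z) z := by
        obtain ⟨p, hp⟩ := huan z hz
        exact ⟨_, hp.has_fpower_series_dslope_fslope⟩
      have hdθa : AnalyticAt ℂ (dslope θ z) z := by
        obtain ⟨p, hp⟩ := theta_analyticAt hq1 ha hz
        exact ⟨_, hp.has_fpower_series_dslope_fslope⟩
      have hdθne : dslope θ z z ≠ 0 := by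
        rw [dslope_same]
        exact theta_deriv_ne hq0 hq1 ha hz hθz
      have hDan : AnalyticAt ℂ (fun y => dslope u z y / dslope θ z y) z :=
        hdza.div hdθa hdθne
      have h1 : v =ᶠ[𝓝[≠] z] fun y => dslope u z y / dslope θ z y := by
        filter_upwards [theta_ne_eventually hq0 hq1 ha hz, self_mem_nhdsWithin]
          with y hy hyz
        obtain ⟨hθy, hy0⟩ := hy
        have hyz' : y ≠ z := hyz
        rw [hvdef]
        simp only [if_neg (show ¬ θ y = 0 from hθy)]
        rw [dslope_of_ne _ hyz', dslope_of_ne _ hyz', slope_def_field, slope_def_field,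
          huz, hθz, sub_zero, sub_zero, div_div_div_comm, div_self (sub_ne_zero.2 hyz'),
          div_one]
      have h2 : v z = dslope u z z / dslope θ z z := by
        rw [hvdef]
        simp only [if_pos hθz, dslope_same, dslope_same]
      have hev : v =ᶠ[𝓝 z] fun y => dslope u z y / dslope θ z y := by
        rw [← nhdsNE_sup_pure z]
        exact Filter.eventually_sup.2 ⟨h1, Filter.eventually_pure.2 h2⟩
      exact hev.differentiableAt_iff.2 hDan.differentiableAt
    · have hev : v =ᶠ[𝓝 z] fun y => u y / θ y := by
        have hmem : {y : ℂ | θ y ≠ 0 ∧ y ≠ 0} ∈ 𝓝 z := by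
          have hc : ContinuousAt θ z := (theta_diffAt hq1 ha hz).continuousAt
          filter_upwards [hc.eventually_ne hθz,
            isOpen_ne.eventually_mem (show z ∈ {w : ℂ | w ≠ 0} from hz)] with y h1' h2'
          exact ⟨h1', h2'⟩
        filter_upwards [hmem] with y hy
        rw [hvdef]
        simp only [if_neg hy.1]
      refine hev.differentiableAt_iff.2 ((hu z hz).div (theta_diffAt hq1 ha hz) hθz)
  -- factorization
  have hfact : ∀ x : ℂ, x ≠ 0 → u x = θ x * v x := by
    intro x hx
    by_cases hθx : θ x = 0
    · rw [hθx, zero_mul]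
      exact hspiral x hx hθx
    · rw [hvdef]
      simp only [if_neg hθx]
      field_simp
  -- functional equation
  have hveq : ∀ x : ℂ, x ≠ 0 → x ^ k * v (q * x) = (lam / (-a)) * v x := by
    have hoff : ∀ x : ℂ, x ≠ 0 → θ x ≠ 0 → x ^ k * v (q * x) = (lam / (-a)) * v x := by
      intro x hx hθx
      have hqx : q * x ≠ 0 := mul_ne_zero hq0 hx
      have hθqx : θ (q * x) ≠ 0 := by
        intro h
        have := theta_funeq hq0 hq1 ha hx
        rw [← hθdef] at this
        rw [h, mul_zero] at this
        exact hθx ((mul_eq_zero.1 this.symm).resolve_left (neg_ne_zero.2 ha))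
      have hufe := hfe x hx
      have hθfe := theta_funeq hq0 hq1 ha hx
      rw [← hθdef] at hθfe
      rw [hvdef]
      simp only [if_neg hθx, if_neg hθqx]
      rw [mul_div_assoc', div_mul_div_comm,
        div_eq_div_iff hθqx (mul_ne_zero (neg_ne_zero.2 ha) hθx)]
      -- x^k * u(qx) * (-a * θ x) = lam * u x * θ (qx)
      -- use x * θ(qx) = -a θ x and x^(k+1) u(qx) = lam u x
      have e1 : x ^ k * u (q*x) * (x * θ (q*x)) = x ^ (k+1) * u (q*x) * θ (q*x) := by ring
      calc x ^ k * u (q * x) * (-a * θ x) = x ^ k * u (q*x) * (x * θ (q*x)) := by rw [hθfe]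
        _ = x ^ (k+1) * u (q*x) * θ (q*x) := e1
        _ = lam * u x * θ (q * x) := by rw [hufe]
    intro x hx
    by_cases hθx : θ x = 0
    · -- continuity argument
      set F : ℂ → ℂ := fun y => y ^ k * v (q * y) - (lam / (-a)) * v y with hF
      have hFcont : ContinuousAt F x := by
        apply ContinuousAt.sub
        · apply ContinuousAt.mul
          · exact (continuous_pow k).continuousAt
          · exact ((hvd (q * x) (mul_ne_zero hq0 hx)).continuousAt).comp
              ((continuous_const.mul continuous_id).continuousAt)
        · exact continuousAt_const.mul (hvd x hx).continuousAt
      have hFz : ∀ᶠ y in 𝓝[≠] x, F y = 0 := by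
        filter_upwards [theta_ne_eventually hq0 hq1 ha hx] with y hy
        have := hoff y hy.2 hy.1
        rw [hF]
        simp only
        rw [this, sub_self]
      have ht1 : Tendsto F (𝓝[≠] x) (𝓝 (F x)) :=
        (hFcont.continuousWithinAt).tendsto
      have ht2 : Tendsto F (𝓝[≠] x) (𝓝 0) := by
        apply Tendsto.congr' _ (tendsto_const_nhds (α := ℂ))
        filter_upwards [hFz] with y hy
        exact hy.symm
      have hFx : F x = 0 := tendsto_nhds_unique ht1 ht2
      rw [hF] at hFx
      simp only at hFx
      exact sub_eq_zero.1 hFx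
    · exact hoff x hx hθx
  refine ⟨v, hvd, hveq, hfact, ?_⟩
  intro hder
  rw [hvdef]
  simp only [if_pos hθa]
  rw [hder, zero_div]

/-- Transfer of a double zero through a factorization `u = θ * v`. -/
lemma deriv_transfer {θ v u : ℂ → ℂ} {z : ℂ} (hz : z ≠ 0)
    (hθ : DifferentiableAt ℂ θ z) (hv : DifferentiableAt ℂ v z)
    (hfact : ∀ x : ℂ, x ≠ 0 → u x = θ x * v x) (hθz : θ z ≠ 0)
    (hu0 : u z = 0) (hu1 : deriv u z = 0) : v z = 0 ∧ deriv v z = 0 := by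
  have hvz : v z = 0 := by
    have := hfact z hz
    rw [hu0] at this
    exact (mul_eq_zero.1 this.symm).resolve_left hθz
  refine ⟨hvz, ?_⟩
  have hev : u =ᶠ[𝓝 z] fun x => θ x * v x := by
    filter_upwards [isOpen_ne.eventually_mem (show z ∈ {w : ℂ | w ≠ 0} from hz)] with y hy
    exact hfact y hy
  have : deriv u z = deriv θ z * v z + θ z * deriv v z := by
    rw [hev.deriv_eq]
    exact deriv_mul hθ hv
  rw [hu1, hvz, mul_zero, zero_add] at this
  exact (mul_eq_zero.1 this.symm).resolve_left hθz

/-- Weight-1 solutions with zeros on two distinct `q`-spirals vanish. -/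
lemma lemW1 {q : ℂ} (hq0 : q ≠ 0) (hq1 : Complex.abs q < 1) {lam : ℂ} (hlam : lam ≠ 0)
    {u : ℂ → ℂ} (hu : ∀ x : ℂ, x ≠ 0 → DifferentiableAt ℂ u x)
    (hfe : ∀ x : ℂ, x ≠ 0 → x ^ 1 * u (q * x) = lam * u x)
    {z₁ z₂ : ℂ} (hz₁ : z₁ ≠ 0) (hz₂ : z₂ ≠ 0) (hne : ∀ m : ℤ, z₂ ≠ q ^ m * z₁)
    (h1 : u z₁ = 0) (h2 : u z₂ = 0) : ∀ x : ℂ, x ≠ 0 → u x = 0 := by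
  obtain ⟨v, hvd, hvfe, hvfact, -⟩ := lemD hq0 hq1 hz₁ hu hlam (k := 0) hfe h1
  have hθz₂ : theta q z₁ z₂ ≠ 0 := by
    intro h
    rw [theta_zero_iff hq0 hq1 hz₁ hz₂] at h
    obtain ⟨m, hm⟩ := h
    exact hne m hm
  have hv2 : v z₂ = 0 := by
    have := hvfact z₂ hz₂
    rw [h2] at this
    exact (mul_eq_zero.1 this.symm).resolve_left hθz₂
  have hν : lam / (-z₁) ≠ 0 := div_ne_zero hlam (neg_ne_zero.2 hz₁)
  have hvfe' : ∀ x : ℂ, x ≠ 0 → v (q * x) = (lam / (-z₁)) * v x := by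
    intro x hx
    have := hvfe x hx
    rwa [pow_zero, one_mul] at this
  have hvzero := lemZ hq0 hq1 hν hvd hvfe' hz₂ hv2
  intro x hx
  rw [hvfact x hx, hvzero x hx, mul_zero]

/-- Weight-2 solutions with a double zero and another zero on a distinct spiral vanish. -/
lemma lemW2 {q : ℂ} (hq0 : q ≠ 0) (hq1 : Complex.abs q < 1) {lam : ℂ} (hlam : lam ≠ 0)
    {u : ℂ → ℂ} (hu : ∀ x : ℂ, x ≠ 0 → DifferentiableAt ℂ u x)
    (hfe : ∀ x : ℂ, x ≠ 0 → x ^ 2 * u (q * x) = lam * u x)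
    {z₁ z₂ : ℂ} (hz₁ : z₁ ≠ 0) (hz₂ : z₂ ≠ 0) (hne : ∀ m : ℤ, z₁ ≠ q ^ m * z₂)
    (h1 : u z₁ = 0) (h1' : deriv u z₁ = 0) (h2 : u z₂ = 0) : ∀ x : ℂ, x ≠ 0 → u x = 0 := by
  obtain ⟨v, hvd, hvfe, hvfact, -⟩ := lemD hq0 hq1 hz₂ hu hlam (k := 1) hfe h2
  have hθz₁ : theta q z₂ z₁ ≠ 0 := by
    intro h
    rw [theta_zero_iff hq0 hq1 hz₂ hz₁] at h
    obtain ⟨m, hm⟩ := h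
    exact hne m hm
  obtain ⟨hv1, hv1'⟩ := deriv_transfer hz₁ (theta_diffAt hq1 hz₂ hz₁) (hvd z₁ hz₁)
    hvfact hθz₁ h1 h1'
  have hlam' : lam / (-z₂) ≠ 0 := div_ne_zero hlam (neg_ne_zero.2 hz₂)
  obtain ⟨w, hwd, hwfe, hwfact, hwder⟩ := lemD hq0 hq1 hz₁ hvd hlam' (k := 0) hvfe hv1
  have hw1 : w z₁ = 0 := hwder hv1'
  have hν : lam / (-z₂) / (-z₁) ≠ 0 := div_ne_zero hlam' (neg_ne_zero.2 hz₁)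
  have hwfe' : ∀ x : ℂ, x ≠ 0 → w (q * x) = (lam / (-z₂) / (-z₁)) * w x := by
    intro x hx
    have := hwfe x hx
    rwa [pow_zero, one_mul] at this
  have hwzero := lemZ hq0 hq1 hν hwd hwfe' hz₁ hw1
  intro x hx
  rw [hvfact x hx, hwfact x hx, hwzero x hx, mul_zero, mul_zero]

/-- Weight-4 solutions with a double zero and three more zeros on distinct spirals vanish. -/
lemma lemW4 {q : ℂ} (hq0 : q ≠ 0) (hq1 : Complex.abs q < 1) {lam : ℂ} (hlam : lam ≠ 0)
    {u : ℂ → ℂ} (hu : ∀ x : ℂ, x ≠ 0 → DifferentiableAt ℂ u x)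
    (hfe : ∀ x : ℂ, x ≠ 0 → x ^ 4 * u (q * x) = lam * u x)
    {z₁ z₂ z₃ z₄ : ℂ} (hz₁ : z₁ ≠ 0) (hz₂ : z₂ ≠ 0) (hz₃ : z₃ ≠ 0) (hz₄ : z₄ ≠ 0)
    (h12 : ∀ m : ℤ, z₁ ≠ q ^ m * z₂) (h14 : ∀ m : ℤ, z₁ ≠ q ^ m * z₄)
    (h24 : ∀ m : ℤ, z₂ ≠ q ^ m * z₄) (h34 : ∀ m : ℤ, z₃ ≠ q ^ m * z₄)
    (h13 : ∀ m : ℤ, z₁ ≠ q ^ m * z₃) (h23 : ∀ m : ℤ, z₂ ≠ q ^ m * z₃)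
    (h1 : u z₁ = 0) (h1' : deriv u z₁ = 0) (h2 : u z₂ = 0) (h3 : u z₃ = 0) (h4 : u z₄ = 0) :
    ∀ x : ℂ, x ≠ 0 → u x = 0 := by
  obtain ⟨v, hvd, hvfe, hvfact, -⟩ := lemD hq0 hq1 hz₄ hu hlam (k := 3) hfe h4
  have hθ : ∀ z : ℂ, z ≠ 0 → (∀ m : ℤ, z ≠ q ^ m * z₄) → theta q z₄ z ≠ 0 := by
    intro z hz hnz h
    rw [theta_zero_iff hq0 hq1 hz₄ hz] at h
    obtain ⟨m, hm⟩ := h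
    exact hnz m hm
  have hvz : ∀ z : ℂ, z ≠ 0 → (∀ m : ℤ, z ≠ q ^ m * z₄) → u z = 0 → v z = 0 := by
    intro z hz hnz huz
    have := hvfact z hz
    rw [huz] at this
    exact (mul_eq_zero.1 this.symm).resolve_left (hθ z hz hnz)
  obtain ⟨hv1, hv1'⟩ := deriv_transfer hz₁ (theta_diffAt hq1 hz₄ hz₁) (hvd z₁ hz₁)
    hvfact (hθ z₁ hz₁ h14) h1 h1'
  have hv2 : v z₂ = 0 := hvz z₂ hz₂ h24 h2
  have hv3 : v z₃ = 0 := hvz z₃ hz₃ h34 h3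
  have hlam' : lam / (-z₄) ≠ 0 := div_ne_zero hlam (neg_ne_zero.2 hz₄)
  obtain ⟨w, hwd, hwfe, hwfact, -⟩ := lemD hq0 hq1 hz₃ hvd hlam' (k := 2) hvfe hv3
  have hθ3 : ∀ z : ℂ, z ≠ 0 → (∀ m : ℤ, z ≠ q ^ m * z₃) → theta q z₃ z ≠ 0 := by
    intro z hz hnz h
    rw [theta_zero_iff hq0 hq1 hz₃ hz] at h
    obtain ⟨m, hm⟩ := h
    exact hnz m hm
  obtain ⟨hw1, hw1'⟩ := deriv_transfer hz₁ (theta_diffAt hq1 hz₃ hz₁) (hwd z₁ hz₁)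
    hwfact (hθ3 z₁ hz₁ h13) hv1 hv1'
  have hw2 : w z₂ = 0 := by
    have := hwfact z₂ hz₂
    rw [hv2] at this
    exact (mul_eq_zero.1 this.symm).resolve_left (hθ3 z₂ hz₂ h23)
  have hlam'' : lam / (-z₄) / (-z₃) ≠ 0 := div_ne_zero hlam' (neg_ne_zero.2 hz₃)
  have hwzero := lemW2 hq0 hq1 hlam'' hwd hwfe hz₁ hz₂ h12 hw1 hw1' hw2
  intro x hx
  rw [hvfact x hx, hwfact x hx, hwzero x hx, mul_zero, mul_zero]

/-- If a row of `P` (satisfying `x P(qx) C = diag ρ · P(x)`) vanishes at two points on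
distinct `q`-spirals, it vanishes identically. -/
lemma rowLem {q : ℂ} (hq0 : q ≠ 0) (hq1 : Complex.abs q < 1)
    {C : Matrix (Fin 2) (Fin 2) ℂ} (hC : C.det ≠ 0) {ρi : ℂ} (hρ : ρi ≠ 0)
    {r : Fin 2 → ℂ → ℂ} (hr : ∀ j, ∀ x : ℂ, x ≠ 0 → DifferentiableAt ℂ (r j) x)
    (hfe : ∀ x : ℂ, x ≠ 0 → ∀ j,
      x * (r 0 (q * x) * C 0 j + r 1 (q * x) * C 1 j) = ρi * r j x)
    {z₁ z₂ : ℂ} (hz₁ : z₁ ≠ 0) (hz₂ : z₂ ≠ 0) (hne : ∀ m : ℤ, z₂ ≠ q ^ m * z₁)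
    (h1 : ∀ j, r j z₁ = 0) (h2 : ∀ j, r j z₂ = 0) :
    ∀ x : ℂ, x ≠ 0 → ∀ j, r j x = 0 := by
  have hdet : C.det = C 0 0 * C 1 1 - C 0 1 * C 1 0 := Matrix.det_fin_two C
  obtain ⟨sv, hsv⟩ : ∃ sv : ℂ,
      sv ^ 2 = (C 0 0 + C 1 1) ^ 2 - 4 * (C 0 0 * C 1 1 - C 0 1 * C 1 0) :=
    IsAlgClosed.exists_pow_nat_eq _ two_pos
  set c₁ : ℂ := ((C 0 0 + C 1 1) + sv) / 2 with hc₁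
  set c₂ : ℂ := ((C 0 0 + C 1 1) - sv) / 2 with hc₂
  have hprod : c₁ * c₂ = C 0 0 * C 1 1 - C 0 1 * C 1 0 := by
    rw [hc₁, hc₂]
    field_simp
    linear_combination -hsv
  have hsum : c₁ + c₂ = C 0 0 + C 1 1 := by rw [hc₁, hc₂]; ring
  have hdetne : C 0 0 * C 1 1 - C 0 1 * C 1 0 ≠ 0 := hdet ▸ hC
  have hc₁ne : c₁ ≠ 0 := by
    intro h
    rw [h, zero_mul] at hprod
    exact hdetne hprod.symm
  have hc₂ne : c₂ ≠ 0 := by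
    intro h
    rw [h, mul_zero] at hprod
    exact hdetne hprod.symm
  -- the matrix N = C - c₂ • 1, entrywise
  set N : Fin 2 → Fin 2 → ℂ := fun i j => C i j - c₂ * (if i = j then 1 else 0) with hNdef
  have hCN : ∀ i j : Fin 2, C i 0 * N 0 j + C i 1 * N 1 j = c₁ * N i j := by
    intro i j
    fin_cases i <;> fin_cases j <;> simp [hNdef, Fin.ext_iff]
    · linear_combination hprod - C 0 0 * hsum
    · linear_combination (-(C 0 1)) * hsum
    · linear_combination (-(C 1 0)) * hsum
    · linear_combination hprod - C 1 1 * hsum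
  -- step 1 : r(x) · N = 0
  have hstep1 : ∀ j : Fin 2, ∀ x : ℂ, x ≠ 0 → r 0 x * N 0 j + r 1 x * N 1 j = 0 := by
    intro j
    set g : ℂ → ℂ := fun x => r 0 x * N 0 j + r 1 x * N 1 j with hg
    have hgd : ∀ x : ℂ, x ≠ 0 → DifferentiableAt ℂ g x := by
      intro x hx
      exact ((hr 0 x hx).mul_const _).add ((hr 1 x hx).mul_const _)
    have hgfe : ∀ x : ℂ, x ≠ 0 → x ^ 1 * g (q * x) = (ρi / c₁) * g x := by
      intro x hx
      rw [pow_one, hg]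
      simp only
      have e0 : C 0 0 * N 0 j + C 0 1 * N 1 j = c₁ * N 0 j := hCN 0 j
      have e1 : C 1 0 * N 0 j + C 1 1 * N 1 j = c₁ * N 1 j := hCN 1 j
      have f0 := hfe x hx 0
      have f1 := hfe x hx 1
      -- x * (r0(qx) N0j + r1(qx) N1j) * c₁ = ρi * (r0 x N0j + r1 x N1j)
      rw [div_mul_eq_mul_div, eq_div_iff hc₁ne]
      linear_combination N 0 j * f0 + N 1 j * f1 - x * r 0 (q*x) * e0 - x * r 1 (q*x) * e1
    have hgz1 : g z₁ = 0 := by rw [hg]; simp [h1 0, h1 1]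
    have hgz2 : g z₂ = 0 := by rw [hg]; simp [h2 0, h2 1]
    exact lemW1 hq0 hq1 (div_ne_zero hρ hc₁ne) hgd hgfe hz₁ hz₂ hne hgz1 hgz2
  -- step 2 : r(x) C = c₂ r(x), componentwise
  have hstep2 : ∀ x : ℂ, x ≠ 0 → ∀ j : Fin 2,
      r 0 x * C 0 j + r 1 x * C 1 j = c₂ * r j x := by
    intro x hx j
    have h0 := hstep1 j x hx
    fin_cases j <;> simp [hNdef, Fin.ext_iff] at h0 ⊢ <;> linear_combination h0
  -- step 3 : each component is a weight-one solution
  intro x hx j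
  set g : ℂ → ℂ := r j with hg
  have hgfe : ∀ x : ℂ, x ≠ 0 → x ^ 1 * g (q * x) = (ρi / c₂) * g x := by
    intro x hx
    have hqx : q * x ≠ 0 := mul_ne_zero hq0 hx
    have f := hfe x hx j
    have s2 := hstep2 (q * x) hqx j
    rw [pow_one, hg]
    rw [div_mul_eq_mul_div, eq_div_iff hc₂ne]
    linear_combination f - x * s2
  exact lemW1 hq0 hq1 (div_ne_zero hρ hc₂ne) (hr j) hgfe hz₁ hz₂ hne (h1 j) (h2 j) x hx

/-- Cross-product identity: columns of `A * B` are proportional to columns of `A`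
when `det A = 0`. -/
lemma colProp {A B : Matrix (Fin 2) (Fin 2) ℂ} (hA : A.det = 0) (j j' : Fin 2) :
    (A * B) 0 j' * A 1 j - (A * B) 1 j' * A 0 j = 0 := by
  rw [Matrix.det_fin_two] at hA
  fin_cases j <;> simp only [Matrix.mul_apply, Fin.sum_univ_two, Fin.isValue, Fin.zero_eta,
    Fin.mk_one]
  · linear_combination (-(B 1 j')) * hA
  · linear_combination (B 0 j') * hA

lemma rowZero0 {A : Matrix (Fin 2) (Fin 2) ℂ} (hdet : A.det = 0) (j : Fin 2)
    (h0 : A 0 j = 0) (h1 : A 1 j ≠ 0) : A 0 0 = 0 ∧ A 0 1 = 0 := by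
  rw [Matrix.det_fin_two] at hdet
  fin_cases j
  · refine ⟨h0, ?_⟩
    simp only [Fin.zero_eta, Fin.isValue] at h0 h1
    rw [h0, zero_mul, zero_sub, neg_eq_zero] at hdet
    exact (mul_eq_zero.1 hdet).resolve_right h1
  · refine ⟨?_, h0⟩
    simp only [Fin.mk_one, Fin.isValue] at h0 h1
    rw [h0, zero_mul, sub_zero] at hdet
    exact (mul_eq_zero.1 hdet).resolve_right h1

lemma rowZero1 {A : Matrix (Fin 2) (Fin 2) ℂ} (hdet : A.det = 0) (j : Fin 2)
    (h0 : A 1 j = 0) (h1 : A 0 j ≠ 0) : A 1 0 = 0 ∧ A 1 1 = 0 := by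
  rw [Matrix.det_fin_two] at hdet
  fin_cases j
  · refine ⟨h0, ?_⟩
    simp only [Fin.zero_eta, Fin.isValue] at h0 h1
    rw [h0, mul_zero, sub_zero] at hdet
    exact (mul_eq_zero.1 hdet).resolve_left h1
  · refine ⟨?_, h0⟩
    simp only [Fin.mk_one, Fin.isValue] at h0 h1
    rw [h0, mul_zero, zero_sub, neg_eq_zero] at hdet
    exact (mul_eq_zero.1 hdet).resolve_left h1

lemma detf_eq (P : ℂ → Matrix (Fin 2) (Fin 2) ℂ) :
    (fun x => (P x).det) = fun x => P x 0 0 * P x 1 1 - P x 0 1 * P x 1 0 :=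
  funext fun x => Matrix.det_fin_two (P x)

lemma detf_diff {P : ℂ → Matrix (Fin 2) (Fin 2) ℂ} (hP : MatHolo P) {z : ℂ} (hz : z ≠ 0) :
    DifferentiableAt ℂ (fun x => (P x).det) z := by
  rw [detf_eq]
  exact ((hP 0 0 z hz).mul (hP 1 1 z hz)).sub ((hP 0 1 z hz).mul (hP 1 0 z hz))

lemma det_deriv_zero {P : ℂ → Matrix (Fin 2) (Fin 2) ℂ} (hP : MatHolo P) {z : ℂ} (hz : z ≠ 0)
    (h0 : P z = 0) : deriv (fun x => (P x).det) z = 0 := by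
  have hij : ∀ i j : Fin 2, P z i j = 0 := by
    intro i j
    rw [h0]
    rfl
  rw [detf_eq]
  rw [deriv_fun_sub ((hP 0 0 z hz).fun_mul (hP 1 1 z hz)) ((hP 0 1 z hz).fun_mul (hP 1 0 z hz)),
    deriv_fun_mul (hP 0 0 z hz) (hP 1 1 z hz), deriv_fun_mul (hP 0 1 z hz) (hP 1 0 z hz)]
  simp [hij 0 0, hij 1 1, hij 0 1, hij 1 0]

end JS16

open JS16 in
/-- The projective invariants computed from the left Mano factor `P` and from `M` at
`x₁, x₂` coincide. -/
theorem stmt16 (q : ℂ) (hq0 : 0 < ‖q‖) (hq1 : ‖q‖ < 1)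
    (ρ σv : Fin 2 → ℂ) (xs : Fin 4 → ℂ)
    (hρ0 : ∀ i, ρ i ≠ 0) (hσ0 : ∀ i, σv i ≠ 0) (hx0 : ∀ k, xs k ≠ 0)
    (hFR : qCong q (xs 0 * xs 1 * xs 2 * xs 3) (ρ 0 * ρ 1 / (σv 0 * σv 1)))
    (hNRρ : ¬ qCong q (ρ 0) (ρ 1)) (hNRσ : ¬ qCong q (σv 0) (σv 1))
    (hNRx : ∀ k l : Fin 4, k ≠ l → ¬ qCong q (xs k) (xs l))
    (hNS : ∀ i j : Fin 2, ¬ qCong q (ρ i / σv j) (xs 0 * xs 1))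
    (M : ℂ → Matrix (Fin 2) (Fin 2) ℂ) (hM : M ∈ FJS q ρ σv xs)
    (C : Matrix (Fin 2) (Fin 2) ℂ) (P Q : ℂ → Matrix (Fin 2) (Fin 2) ℂ)
    (hMano : Mano q ρ (xs 0) (xs 1) M C P Q) :
    M (xs 0) ≠ 0 ∧ M (xs 1) ≠ 0 ∧ P (xs 0) ≠ 0 ∧ P (xs 1) ≠ 0 ∧
    ∀ p1 q1 p2 q2 f1 g1 f2 g2 : ℂ,
      IsNzCol (P (xs 0)) p1 q1 → IsNzCol (P (xs 1)) p2 q2 →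
      IsNzCol (M (xs 0)) f1 g1 → IsNzCol (M (xs 1)) f2 g2 →
      ¬(p1 * q2 = 0 ∧ p2 * q1 = 0) ∧ p1 * q2 * (f2 * g1) = f1 * g2 * (p2 * q1) := by
  obtain ⟨hMh, hMfe, ⟨x₀, hx₀, hMdet⟩, hMzeros⟩ := hM
  obtain ⟨hCu, hPh, hQh, hPQ, hPfe, ⟨xp, hxp, hPdet⟩, hdP1, hdP2⟩ := hMano
  have hq0' : q ≠ 0 := by
    intro h
    rw [h] at hq0
    simp at hq0
  have hCne : C.det ≠ 0 := hCu.ne_zero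
  have hnc : ∀ k l : Fin 4, k ≠ l → ∀ m : ℤ, xs k ≠ q ^ m * xs l :=
    fun k l hkl m h => hNRx k l hkl ⟨m, h⟩
  -- determinant functional equations
  have hdMd : ∀ x : ℂ, x ≠ 0 → DifferentiableAt ℂ (fun x => (M x).det) x :=
    fun x hx => detf_diff hMh hx
  have hdPd : ∀ x : ℂ, x ≠ 0 → DifferentiableAt ℂ (fun x => (P x).det) x :=
    fun x hx => detf_diff hPh hx
  have hdMfe : ∀ x : ℂ, x ≠ 0 →
      x ^ 4 * (M (q * x)).det = (ρ 0 * ρ 1 / (σv 0 * σv 1)) * (M x).det := by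
    intro x hx
    have h := congrArg Matrix.det (hMfe x hx)
    rw [Matrix.det_smul, Matrix.det_mul, Matrix.det_mul, Matrix.det_diagonal,
      Matrix.det_diagonal] at h
    rw [Fintype.card_fin, Fin.prod_univ_two, Fin.prod_univ_two] at h
    have hσ : σv 0 * σv 1 ≠ 0 := mul_ne_zero (hσ0 0) (hσ0 1)
    rw [div_mul_eq_mul_div, eq_div_iff hσ]
    linear_combination h
  have hdPfe : ∀ x : ℂ, x ≠ 0 →
      x ^ 2 * (P (q * x)).det = (ρ 0 * ρ 1 / C.det) * (P x).det := by
    intro x hx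
    have h := congrArg Matrix.det (hPfe x hx)
    rw [Matrix.det_smul, Matrix.det_mul, Matrix.det_mul, Matrix.det_diagonal] at h
    rw [Fintype.card_fin, Fin.prod_univ_two] at h
    rw [div_mul_eq_mul_div, eq_div_iff hCne]
    linear_combination h
  have hlamM : ρ 0 * ρ 1 / (σv 0 * σv 1) ≠ 0 :=
    div_ne_zero (mul_ne_zero (hρ0 0) (hρ0 1)) (mul_ne_zero (hσ0 0) (hσ0 1))
  have hlamP : ρ 0 * ρ 1 / C.det ≠ 0 :=
    div_ne_zero (mul_ne_zero (hρ0 0) (hρ0 1)) hCne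
  -- M (xs 0) ≠ 0
  have hMne0 : M (xs 0) ≠ 0 := by
    intro h0
    have hzero := lemW4 hq0' hq1 hlamM hdMd hdMfe (hx0 0) (hx0 1) (hx0 2) (hx0 3)
      (hnc 0 1 (by decide)) (hnc 0 3 (by decide)) (hnc 1 3 (by decide)) (hnc 2 3 (by decide))
      (hnc 0 2 (by decide)) (hnc 1 2 (by decide))
      (hMzeros 0) (det_deriv_zero hMh (hx0 0) h0) (hMzeros 1) (hMzeros 2) (hMzeros 3)
    exact hMdet (hzero x₀ hx₀)
  have hMne1 : M (xs 1) ≠ 0 := by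
    intro h0
    have hzero := lemW4 hq0' hq1 hlamM hdMd hdMfe (hx0 1) (hx0 0) (hx0 2) (hx0 3)
      (hnc 1 0 (by decide)) (hnc 1 3 (by decide)) (hnc 0 3 (by decide)) (hnc 2 3 (by decide))
      (hnc 1 2 (by decide)) (hnc 0 2 (by decide))
      (hMzeros 1) (det_deriv_zero hMh (hx0 1) h0) (hMzeros 0) (hMzeros 2) (hMzeros 3)
    exact hMdet (hzero x₀ hx₀)
  have hPne0 : P (xs 0) ≠ 0 := by
    intro h0
    have hzero := lemW2 hq0' hq1 hlamP hdPd hdPfe (hx0 0) (hx0 1)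
      (hnc 0 1 (by decide)) hdP1 (det_deriv_zero hPh (hx0 0) h0) hdP2
    exact hPdet (hzero xp hxp)
  have hPne1 : P (xs 1) ≠ 0 := by
    intro h0
    have hzero := lemW2 hq0' hq1 hlamP hdPd hdPfe (hx0 1) (hx0 0)
      (hnc 1 0 (by decide)) hdP2 (det_deriv_zero hPh (hx0 1) h0) hdP1
    exact hPdet (hzero xp hxp)
  refine ⟨hMne0, hMne1, hPne0, hPne1, ?_⟩
  intro p1 q1 p2 q2 f1 g1 f2 g2 hc1 hc2 hc3 hc4
  obtain ⟨jP1, hp1c, hq1c, hnz1⟩ := hc1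
  obtain ⟨jP2, hp2c, hq2c, hnz2⟩ := hc2
  obtain ⟨jM1, hf1, hg1, hnzM1⟩ := hc3
  obtain ⟨jM2, hf2, hg2, hnzM2⟩ := hc4
  -- entrywise functional equation for P
  have hPentry : ∀ x : ℂ, x ≠ 0 → ∀ i j : Fin 2,
      x * (P (q * x) i 0 * C 0 j + P (q * x) i 1 * C 1 j) = ρ i * P x i j := by
    intro x hx i j
    have h := Matrix.ext_iff.mpr (hPfe x hx) i j
    rw [Matrix.smul_apply, Matrix.mul_apply, Fin.sum_univ_two, Matrix.diagonal_mul] at h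
    rw [smul_eq_mul] at h
    exact h
  constructor
  · -- nondegeneracy
    rintro ⟨hA, hB⟩
    have hrowcontra : ∀ i : Fin 2, (∀ j, P (xs 0) i j = 0) → (∀ j, P (xs 1) i j = 0) → False := by
      intro i hr1 hr2
      have hzero := rowLem hq0' hq1 hCne (hρ0 i)
        (r := fun j x => P x i j) (fun j x hx => hPh i j x hx)
        (fun x hx j => hPentry x hx i j) (hx0 0) (hx0 1)
        (hnc 1 0 (by decide)) hr1 hr2
      apply hPdet
      rw [Matrix.det_fin_two]
      fin_cases i
      · rw [show P xp 0 0 = 0 from by simpa using hzero xp hxp 0,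
          show P xp 0 1 = 0 from by simpa using hzero xp hxp 1]
        ring
      · rw [show P xp 1 0 = 0 from by simpa using hzero xp hxp 0,
          show P xp 1 1 = 0 from by simpa using hzero xp hxp 1]
        ring
    rcases mul_eq_zero.1 hA with hp1z | hq2z <;> rcases mul_eq_zero.1 hB with hp2z | hq1z
    · -- p1 = 0 and p2 = 0 : top row of P vanishes at xs 0 and xs 1
      have hq1ne : q1 ≠ 0 := fun h => hnz1 ⟨hp1z, h⟩
      have hq2ne : q2 ≠ 0 := fun h => hnz2 ⟨hp2z, h⟩
      have hr1 := rowZero0 hdP1 jP1 (hp1c ▸ hp1z) (hq1c ▸ hq1ne)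
      have hr2 := rowZero0 hdP2 jP2 (hp2c ▸ hp2z) (hq2c ▸ hq2ne)
      exact hrowcontra 0 (fun j => by fin_cases j <;> [exact hr1.1; exact hr1.2])
        (fun j => by fin_cases j <;> [exact hr2.1; exact hr2.2])
    · exact hnz1 ⟨hp1z, hq1z⟩
    · exact hnz2 ⟨hp2z, hq2z⟩
    · -- q1 = 0 and q2 = 0 : bottom row of P vanishes at xs 0 and xs 1
      have hp1ne : p1 ≠ 0 := fun h => hnz1 ⟨h, hq1z⟩
      have hp2ne : p2 ≠ 0 := fun h => hnz2 ⟨h, hq2z⟩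
      have hr1 := rowZero1 hdP1 jP1 (hq1c ▸ hq1z) (hp1c ▸ hp1ne)
      have hr2 := rowZero1 hdP2 jP2 (hq2c ▸ hq2z) (hp2c ▸ hp2ne)
      exact hrowcontra 1 (fun j => by fin_cases j <;> [exact hr1.1; exact hr1.2])
        (fun j => by fin_cases j <;> [exact hr2.1; exact hr2.2])
  · -- the cross-ratio identity
    have hcross1 : f1 * q1 - g1 * p1 = 0 := by
      have h := colProp (A := P (xs 0)) (B := Q (xs 0)) hdP1 jP1 jM1
      rw [← hPQ (xs 0) (hx0 0)] at h
      rw [hf1, hg1, hp1c, hq1c]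
      linear_combination h
    have hcross2 : f2 * q2 - g2 * p2 = 0 := by
      have h := colProp (A := P (xs 1)) (B := Q (xs 1)) hdP2 jP2 jM2
      rw [← hPQ (xs 1) (hx0 1)] at h
      rw [hf2, hg2, hp2c, hq2c]
      linear_combination h
    linear_combination p1 * g1 * hcross2 - g2 * p2 * hcross1
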